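/- Let k be an algebraically closed field of characteristic 2 and S = k[v,w]/(w^2 + v^2 w + v), with the k-algebra involution ι on the fraction field induced via the isomorphism with R_0 = k[x,z,(z+1)^{-1}]/(z+z^2+x^3) carrying the map x ↦ x/(z+1), z ↦ z/(z+1). Then ι(v) = v and ι(w) = w + v^2. -/
import Mathlib


open MvPolynomial

/-- With `S = k[v,w]/(w² + v²w + v)` and
`R₀ = k[x,z,(z+1)⁻¹]/(z + z² + x³)` (modelled with `t = (z+1)⁻¹` as a third variable),
let `Φ : S → R₀` be the isomorphism `v ↦ x²/(z+1)`, `w ↦ x/(z+1)`, and let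
`ι* : R₀ → R₀` be the involution `x ↦ x/(z+1)`, `z ↦ z/(z+1)`, `(z+1)⁻¹ ↦ z+1`.
Then the induced involution `ι = Φ⁻¹ ∘ ι* ∘ Φ` on `S` satisfies `ι(v) = v` and
`ι(w) = w + v²`; equivalently `ι*(Φ(v)) = Φ(v)` and `ι*(Φ(w)) = Φ(w + v²)`. -/
theorem stmt2 (k : Type*) [Field k] [IsAlgClosed k] [CharP k 2]
    (IS : Ideal (MvPolynomial (Fin 2) k))
    (hIS : IS = Ideal.span {(X 1)^2 + (X 0)^2 * X 1 + X 0})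
    (IR : Ideal (MvPolynomial (Fin 3) k))
    (hIR : IR = Ideal.span {X 1 + (X 1)^2 + (X 0)^3, X 2 * (X 1 + 1) - 1})
    (Φ : (MvPolynomial (Fin 2) k ⧸ IS) →ₐ[k] (MvPolynomial (Fin 3) k ⧸ IR))
    (hbij : Function.Bijective Φ)
    (hΦv : Φ (Ideal.Quotient.mk IS (X 0)) = Ideal.Quotient.mk IR ((X 0)^2 * X 2))
    (hΦw : Φ (Ideal.Quotient.mk IS (X 1)) = Ideal.Quotient.mk IR (X 0 * X 2))
    (ι : (MvPolynomial (Fin 3) k ⧸ IR) →ₐ[k] (MvPolynomial (Fin 3) k ⧸ IR))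
    (hιx : ι (Ideal.Quotient.mk IR (X 0)) = Ideal.Quotient.mk IR (X 0 * X 2))
    (hιz : ι (Ideal.Quotient.mk IR (X 1)) = Ideal.Quotient.mk IR (X 1 * X 2))
    (hιt : ι (Ideal.Quotient.mk IR (X 2)) = Ideal.Quotient.mk IR (X 1 + 1)) :
    ι (Φ (Ideal.Quotient.mk IS (X 0))) = Φ (Ideal.Quotient.mk IS (X 0)) ∧
    ι (Φ (Ideal.Quotient.mk IS (X 1))) = Φ (Ideal.Quotient.mk IS (X 1 + (X 0)^2)) := by
  have h2 : (2 : MvPolynomial (Fin 3) k) = 0 := by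
    have : ((2 : ℕ) : MvPolynomial (Fin 3) k) = 0 := CharP.cast_eq_zero _ 2
    simpa using this
  set f : MvPolynomial (Fin 3) k := X 1 + (X 1)^2 + (X 0)^3 with hf
  set g : MvPolynomial (Fin 3) k := X 2 * (X 1 + 1) - 1 with hg
  have hfmem : f ∈ IR := by rw [hIR]; exact Ideal.subset_span (by simp)
  have hgmem : g ∈ IR := by rw [hIR]; exact Ideal.subset_span (by simp)
  constructor
  · have e1 : (Ideal.Quotient.mk IR) ((X 0)^2 * X 2)
        = ((Ideal.Quotient.mk IR) (X 0))^2 * (Ideal.Quotient.mk IR) (X 2) := by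
      rw [map_mul, map_pow]
    rw [hΦv, e1, map_mul, map_pow, hιx, hιt, ← map_pow, ← map_mul, ← map_pow, ← map_mul,
      Ideal.Quotient.eq]
    have key : (X 0 * X 2 : MvPolynomial (Fin 3) k)^2 * (X 1 + 1) - (X 0)^2 * X 2
        = ((X 0)^2 * X 2) * g := by rw [hg]; ring
    rw [key]
    exact Ideal.mul_mem_left _ _ hgmem
  · have e2 : (Ideal.Quotient.mk IS) (X 1 + (X 0)^2)
        = (Ideal.Quotient.mk IS) (X 1) + ((Ideal.Quotient.mk IS) (X 0))^2 := by
      rw [RingHom.map_add, RingHom.map_pow]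
    have e3 : (Ideal.Quotient.mk IR) (X 0 * X 2)
        = (Ideal.Quotient.mk IR) (X 0) * (Ideal.Quotient.mk IR) (X 2) := map_mul _ _ _
    rw [hΦw, e2, map_add, map_pow, hΦw, hΦv, e3, map_mul, hιx, hιt, ← map_mul,
      ← map_pow, ← map_mul, ← map_add, Ideal.Quotient.eq]
    have key : (X 0 * X 2 : MvPolynomial (Fin 3) k) * (X 1 + 1) -
        (X 0 * X 2 + ((X 0)^2 * X 2)^2)
        = (X 0 * (X 2)^2) * f + (X 0 * X 2 * X 1) * g := by
      rw [hf, hg]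
      linear_combination (X 0 * X 2 * X 1 - (X 0)^4 * (X 2)^2
        - X 0 * (X 2)^2 * X 1 - X 0 * (X 2)^2 * (X 1)^2) * h2
    rw [key]
    exact Ideal.add_mem _ (Ideal.mul_mem_left _ _ hfmem) (Ideal.mul_mem_left _ _ hgmem)
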